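/- Let H be an n-dimensional complex vector space and let T : H → H be an invertible semilinear operator (linear over a field automorphism of ℂ) that sends orthogonal vectors to orthogonal vectors with respect to a given inner product. Then T is a scalar multiple of a unitary or conjugate-unitary (antiunitary) operator. -/

import Mathlib

open Module

open scoped ComplexConjugate InnerProductSpace

private def tau16 (σ : ℂ ≃+* ℂ) (him : ∀ r : ℝ, (σ r).im = 0) : ℝ →+* ℝ where
  toFun r := (σ r).re
  map_one' := by simp
  map_mul' r s := by
    show (σ ((r * s : ℝ) : ℂ)).re = _
    push_cast
    rw [map_mul σ, Complex.mul_re, him r, him s]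
    simp
  map_zero' := by simp
  map_add' r s := by
    show (σ ((r + s : ℝ) : ℂ)).re = _
    push_cast
    rw [map_add σ, Complex.add_re]

private lemma aux_sigma_16 (σ : ℂ ≃+* ℂ) (h : ∀ a : ℂ, σ (conj a) = conj (σ a)) :
    (∀ a : ℂ, σ a = a) ∨ (∀ a : ℂ, σ a = conj a) := by
  have him : ∀ r : ℝ, (σ r).im = 0 := by
    intro r
    rw [← Complex.conj_eq_iff_im, ← h, Complex.conj_ofReal]
  have hreal : ∀ r : ℝ, σ r = (r : ℂ) := by
    intro r
    have h1 : (σ r).re = r := by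
      have := DFunLike.congr_fun (Subsingleton.elim (tau16 σ him) (RingHom.id ℝ)) r
      exact this
    exact Complex.ext h1 (him r)
  have hI : σ Complex.I = Complex.I ∨ σ Complex.I = -Complex.I := by
    have h2 : σ Complex.I * σ Complex.I = -1 := by
      rw [← map_mul, Complex.I_mul_I, map_neg, map_one]
    have h3 : (σ Complex.I - Complex.I) * (σ Complex.I + Complex.I) = 0 := by
      linear_combination h2 - Complex.I_mul_I
    rcases mul_eq_zero.mp h3 with h' | h'
    · left; linear_combination h'
    · right; linear_combination h'
  rcases hI with hI | hI
  · left
    intro a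
    calc σ a = σ ((a.re : ℂ) + (a.im : ℂ) * Complex.I) := by rw [Complex.re_add_im]
    _ = (a.re : ℂ) + (a.im : ℂ) * Complex.I := by
        rw [map_add, map_mul, hreal, hreal, hI]
    _ = a := Complex.re_add_im a
  · right
    intro a
    calc σ a = σ ((a.re : ℂ) + (a.im : ℂ) * Complex.I) := by rw [Complex.re_add_im]
    _ = (a.re : ℂ) - (a.im : ℂ) * Complex.I := by
        rw [map_add, map_mul, hreal, hreal, hI]; ring
    _ = conj a := by
        simp [Complex.ext_iff]


theorem stmt_16 {H : Type*} [NormedAddCommGroup H] [InnerProductSpace ℂ H]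
    [FiniteDimensional ℂ H] (hn : 2 ≤ finrank ℂ H)
    (σ : ℂ ≃+* ℂ) (T : H → H) (hbij : Function.Bijective T)
    (hadd : ∀ x y : H, T (x + y) = T x + T y)
    (hsmul : ∀ (a : ℂ) (x : H), T (a • x) = σ a • T x)
    (horth : ∀ x y : H, inner ℂ x y = (0 : ℂ) → inner ℂ (T x) (T y) = (0 : ℂ)) :
    ∃ c : ℂ, c ≠ 0 ∧
      ((∃ U : H ≃ₗᵢ[ℂ] H, ∀ x, T x = c • U x) ∨
       (∃ U : H ≃ₗᵢ⋆[ℂ] H, ∀ x, T x = c • U x)) := by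
  classical
  -- basic facts about T
  have hT0 : T 0 = 0 := by
    have h : T 0 = T 0 + T 0 := by simpa using hadd 0 0
    exact add_eq_left.mp h.symm
  have hTneg : ∀ x : H, T (-x) = - T x := by
    intro x
    have : T ((-1 : ℂ) • x) = σ (-1) • T x := hsmul _ _
    simpa using this
  have hTsub : ∀ x y : H, T (x - y) = T x - T y := by
    intro x y
    rw [sub_eq_add_neg, hadd, hTneg, sub_eq_add_neg]
  -- cross-orthogonality in both directions
  have horth' : ∀ x y : H, (inner ℂ x y : ℂ) = 0 →
      (inner ℂ (T x) (T y) : ℂ) = 0 ∧ (inner ℂ (T y) (T x) : ℂ) = 0 :=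
    fun x y hxy => ⟨horth x y hxy, horth y x (inner_eq_zero_symm.mp hxy)⟩
  -- step A : equal norms orthogonal vectors have equal T-norms
  have stepA : ∀ u v : H, ‖u‖ = ‖v‖ → (inner ℂ u v : ℂ) = 0 → ‖T u‖ = ‖T v‖ := by
    intro u v hnorm huv
    obtain ⟨huv1, huv2⟩ := horth' u v huv
    have h1 : (inner ℂ (u + v) (u - v) : ℂ) = 0 := by
      rw [inner_sub_right, inner_add_left, inner_add_left, huv, inner_self_eq_norm_sq_to_K,
        inner_self_eq_norm_sq_to_K, hnorm]
      have : (inner ℂ v u : ℂ) = 0 := inner_eq_zero_symm.mp huv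
      rw [this]
      ring
    have h2 := horth _ _ h1
    rw [hadd, hTsub, inner_sub_right, inner_add_left, inner_add_left, huv1, huv2,
      inner_self_eq_norm_sq_to_K, inner_self_eq_norm_sq_to_K] at h2
    rw [add_zero, zero_add, sub_eq_zero] at h2
    have h4 : ‖T u‖ ^ 2 = ‖T v‖ ^ 2 := by exact_mod_cast h2
    exact (sq_eq_sq₀ (norm_nonneg _) (norm_nonneg _)).mp h4
  -- orthonormal vectors
  set e := stdOrthonormalBasis ℂ H with he
  have h0 : (0 : ℕ) < finrank ℂ H := by omega
  have h1 : (1 : ℕ) < finrank ℂ H := by omega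
  set e1 := e ⟨0, h0⟩ with he1
  set e2 := e ⟨1, h1⟩ with he2
  have hne : (⟨0, h0⟩ : Fin (finrank ℂ H)) ≠ ⟨1, h1⟩ := by
    simp [Fin.ext_iff]
  have hn1 : ‖e1‖ = 1 := e.orthonormal.1 _
  have hn2 : ‖e2‖ = 1 := e.orthonormal.1 _
  have h12 : (inner ℂ e1 e2 : ℂ) = 0 := e.orthonormal.2 hne
  have h21 : (inner ℂ e2 e1 : ℂ) = 0 := inner_eq_zero_symm.mp h12
  have he1ne : e1 ≠ 0 := by
    intro h
    rw [h, norm_zero] at hn1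
    norm_num at hn1
  have hTe1 : T e1 ≠ 0 := by
    intro h
    exact he1ne (hbij.1 (h.trans hT0.symm))
  set r := ‖T e1‖ with hr
  have hrpos : 0 < r := norm_pos_iff.mpr hTe1
  have hre2 : ‖T e2‖ = r := stepA e2 e1 (by rw [hn1, hn2]) h21
  obtain ⟨hc12, hc21⟩ := horth' e1 e2 h12
  -- sigma commutes with conjugation
  have hR1 : (inner ℂ (T e1) (T e1) : ℂ) ≠ 0 := inner_self_ne_zero.mpr hTe1
  have hRR : (inner ℂ (T e2) (T e2) : ℂ) = inner ℂ (T e1) (T e1) := by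
    rw [inner_self_eq_norm_sq_to_K, inner_self_eq_norm_sq_to_K, hre2, hr]
  have hσc : ∀ a : ℂ, σ (conj a) = conj (σ a) := by
    intro a
    have huv : (inner ℂ (e1 + a • e2) ((-(conj a)) • e1 + e2) : ℂ) = 0 := by
      simp only [inner_add_left, inner_add_right, inner_smul_left, inner_smul_right,
        h12, h21, inner_self_eq_norm_sq_to_K, hn1, hn2, Complex.ofReal_one, one_pow]
      ring
    have hTuv := horth _ _ huv
    rw [hadd, hadd, hsmul, hsmul, inner_add_left] at hTuv
    have hA : (inner ℂ (T e1) (σ (-(conj a)) • T e1 + T e2) : ℂ)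
        = σ (-(conj a)) * (inner ℂ (T e1) (T e1) : ℂ) := by
      rw [inner_add_right, inner_smul_right, hc12, add_zero]
    have hB : (inner ℂ (σ a • T e2) (σ (-(conj a)) • T e1 + T e2) : ℂ)
        = conj (σ a) * (inner ℂ (T e1) (T e1) : ℂ) := by
      rw [inner_add_right, inner_smul_right, inner_smul_left, inner_smul_left, hc21, hRR]
      ring
    rw [hA, hB] at hTuv
    have hkey : (σ (-(conj a)) + conj (σ a)) * (inner ℂ (T e1) (T e1) : ℂ) = 0 := by
      linear_combination hTuv
    have hres := (mul_eq_zero.mp hkey).resolve_right hR1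
    rw [map_neg] at hres
    linear_combination -hres
  have hcases := aux_sigma_16 σ hσc
  have hrealσ : ∀ t : ℝ, σ t = (t : ℂ) := by
    intro t
    rcases hcases with hc | hc
    · rw [hc]
    · rw [hc, Complex.conj_ofReal]
  have habs : ∀ a : ℂ, ‖σ a‖ = ‖a‖ := by
    intro a
    rcases hcases with hc | hc
    · rw [hc]
    · rw [hc]
      exact RCLike.norm_conj a
  -- norms on the orthogonal complement of e1
  have hzlem : ∀ z : H, (inner ℂ e1 z : ℂ) = 0 → ‖T z‖ = r * ‖z‖ := by
    intro z hz
    rcases eq_or_ne z 0 with rfl | hz0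
    · simp [hT0]
    · have hnz : ‖z‖ ≠ 0 := norm_ne_zero_iff.mpr hz0
      set u := ((‖z‖ : ℂ))⁻¹ • z with hu
      have hzu : z = ((‖z‖ : ℂ)) • u := by
        rw [hu, smul_smul, mul_inv_cancel₀ (by exact_mod_cast hnz), one_smul]
      have hun : ‖u‖ = 1 := by
        rw [hu, norm_smul]
        simp [hnz]
      have hz' : (inner ℂ z e1 : ℂ) = 0 := inner_eq_zero_symm.mp hz
      have hinner : (inner ℂ u e1 : ℂ) = 0 := by
        rw [hu, inner_smul_left, hz', mul_zero]
      have hTu : ‖T u‖ = r := stepA u e1 (by rw [hun, hn1]) hinner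
      calc ‖T z‖ = ‖T (((‖z‖ : ℂ)) • u)‖ := by rw [← hzu]
      _ = ‖σ ((‖z‖ : ℂ)) • T u‖ := by rw [hsmul]
      _ = ‖z‖ * r := by
          rw [hrealσ, norm_smul, hTu]
          simp
      _ = r * ‖z‖ := mul_comm _ _
  -- norm multiplicativity everywhere
  have hnorm : ∀ y : H, ‖T y‖ = r * ‖y‖ := by
    intro y
    set α := (inner ℂ e1 y : ℂ) with hα
    set z := y - α • e1 with hzdef
    have hez : (inner ℂ e1 z : ℂ) = 0 := by
      rw [hzdef, inner_sub_right, inner_smul_right, inner_self_eq_norm_sq_to_K, hn1]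
      push_cast
      ring
    have hy : y = α • e1 + z := by rw [hzdef]; abel
    have hTz : ‖T z‖ = r * ‖z‖ := hzlem z hez
    have hTy : T y = σ α • T e1 + T z := by
      conv_lhs => rw [hy]
      rw [hadd, hsmul]
    have horthT : (inner ℂ (σ α • T e1) (T z) : ℂ) = 0 := by
      rw [inner_smul_left, horth e1 z hez, mul_zero]
    have h5 := norm_add_sq_eq_norm_sq_add_norm_sq_of_inner_eq_zero _ _ horthT
    have h6 := norm_add_sq_eq_norm_sq_add_norm_sq_of_inner_eq_zero (α • e1) z
      (by rw [inner_smul_left, hez, mul_zero])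
    rw [← hy] at h6
    rw [norm_smul, hn1, mul_one] at h6
    have hA2 : ‖σ α • T e1‖ = ‖α‖ * r := by rw [norm_smul, habs, ← hr]
    rw [hTy]
    have hsq : ‖σ α • T e1 + T z‖ * ‖σ α • T e1 + T z‖ = (r * ‖y‖) * (r * ‖y‖) := by
      rw [h5, hA2, hTz]
      linear_combination (-(r * r)) * h6
    have h7 : (0:ℝ) ≤ ‖σ α • T e1 + T z‖ := norm_nonneg _
    have h8 : (0:ℝ) ≤ r * ‖y‖ := by positivity
    nlinarith [hsq, h7, h8]
  -- construct the (anti)unitary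
  have hcne : ((r : ℂ)) ≠ 0 := by exact_mod_cast hrpos.ne'
  refine ⟨(r : ℂ), hcne, ?_⟩
  rcases hcases with hid | hconj
  · left
    let Tl : H →ₗ[ℂ] H :=
      { toFun := T
        map_add' := hadd
        map_smul' := fun a x => by simp only [RingHom.id_apply]; rw [hsmul, hid] }
    let Ul : H →ₗ[ℂ] H := ((r : ℂ))⁻¹ • Tl
    have hUl : ∀ x, Ul x = ((r : ℂ))⁻¹ • T x := fun x => rfl
    have hUb : Function.Bijective Ul := by
      constructor
      · intro x y hxy
        rw [hUl, hUl] at hxy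
        exact hbij.1 (smul_right_injective H (inv_ne_zero hcne) hxy)
      · intro y
        obtain ⟨x, hx⟩ := hbij.2 (((r : ℂ)) • y)
        refine ⟨x, ?_⟩
        rw [hUl, hx, smul_smul, inv_mul_cancel₀ hcne, one_smul]
    refine ⟨⟨LinearEquiv.ofBijective Ul hUb, fun x => ?_⟩, fun x => ?_⟩
    · show ‖((r : ℂ))⁻¹ • T x‖ = ‖x‖
      rw [norm_smul, hnorm, norm_inv]
      simp only [Complex.norm_real, Real.norm_eq_abs, abs_norm]
      rw [abs_of_pos hrpos]
      field_simp
    · show T x = (r : ℂ) • (((r : ℂ))⁻¹ • T x)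
      rw [smul_smul, mul_inv_cancel₀ hcne, one_smul]
  · right
    let Tl : H →ₛₗ[starRingEnd ℂ] H :=
      { toFun := T
        map_add' := hadd
        map_smul' := fun a x => by show T (a • x) = (starRingEnd ℂ) a • T x; rw [hsmul, hconj] }
    let Ul : H →ₛₗ[starRingEnd ℂ] H := ((r : ℂ))⁻¹ • Tl
    have hUl : ∀ x, Ul x = ((r : ℂ))⁻¹ • T x := fun x => rfl
    have hUb : Function.Bijective Ul := by
      constructor
      · intro x y hxy
        rw [hUl, hUl] at hxy
        exact hbij.1 (smul_right_injective H (inv_ne_zero hcne) hxy)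
      · intro y
        obtain ⟨x, hx⟩ := hbij.2 (((r : ℂ)) • y)
        refine ⟨x, ?_⟩
        rw [hUl, hx, smul_smul, inv_mul_cancel₀ hcne, one_smul]
    refine ⟨⟨LinearEquiv.ofBijective Ul hUb, fun x => ?_⟩, fun x => ?_⟩
    · show ‖((r : ℂ))⁻¹ • T x‖ = ‖x‖
      rw [norm_smul, hnorm, norm_inv]
      simp only [Complex.norm_real, Real.norm_eq_abs, abs_norm]
      rw [abs_of_pos hrpos]
      field_simp
    · show T x = (r : ℂ) • (((r : ℂ))⁻¹ • T x)
      rw [smul_smul, mul_inv_cancel₀ hcne, one_smul]
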